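/- Let q > 2, ε ∈ (0,1], δ = 2^{-1} 4^{-2/(q-2)} ε^{q/(q-2)}, and let g: ℝ → ℝ satisfy |g(x) − f(x)| ≤ δ·max{1, |x|^q} for all x, where f(x) = x² for x ∈ [0,1] and f(x) = max{x, 0} otherwise. Define Φ(x) = ε̃^{-2q̃}(g(ε̃^{q̃}x) + g(−ε̃^{q̃}x)) with ε̃ = ε/4, q̃ = 1/(q−2). Then |Φ(x) − x²| ≤ ε·max{1, |x|^q} for all x ∈ ℝ. -/

import Mathlib

set_option maxHeartbeats 1000000 in
theorem stmt_15 (q ε : ℝ) (hq : 2 < q) (hε : ε ∈ Set.Ioc (0 : ℝ) 1) (f g : ℝ → ℝ)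
    (hf : ∀ x ∈ Set.Icc (0 : ℝ) 1, f x = x ^ 2)
    (hf' : ∀ x : ℝ, x ∉ Set.Icc (0 : ℝ) 1 → f x = max x 0)
    (hg : ∀ x : ℝ,
      |g x - f x| ≤ 2⁻¹ * (4 : ℝ) ^ (-(2 / (q - 2))) * ε ^ (q / (q - 2)) * max 1 (|x| ^ q)) :
    ∀ x : ℝ,
      |(ε / 4) ^ (-(2 / (q - 2))) *
          (g ((ε / 4) ^ (1 / (q - 2)) * x) + g (-((ε / 4) ^ (1 / (q - 2)) * x))) - x ^ 2|
        ≤ ε * max 1 (|x| ^ q) := by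
  obtain ⟨hε0, hε1⟩ := hε
  intro x
  set p := q - 2 with hp_def
  have hp : 0 < p := by rw [hp_def]; linarith
  have hpq : p + 2 = q := by rw [hp_def]; ring
  have hε4 : (0:ℝ) < ε / 4 := by linarith
  have hε4le : ε / 4 ≤ 1 := by linarith
  set c := (ε / 4) ^ (1 / p) with hc_def
  have hc0 : (0:ℝ) < c := Real.rpow_pos_of_pos hε4 _
  have hc1 : c ≤ 1 := Real.rpow_le_one hε4.le hε4le (by positivity)
  have hcp : c ^ p = ε / 4 := by
    rw [hc_def, ← Real.rpow_mul hε4.le, one_div_mul_cancel hp.ne', Real.rpow_one]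
  set A := (ε / 4) ^ (-(2 / p)) with hA_def
  have hA0 : (0:ℝ) < A := Real.rpow_pos_of_pos hε4 _
  have hAc : A * c ^ 2 = 1 := by
    have h2 : c ^ 2 = (ε / 4) ^ (2 / p : ℝ) := by
      rw [hc_def, ← Real.rpow_natCast ((ε/4) ^ (1/p)) 2, ← Real.rpow_mul hε4.le]
      congr 1
      push_cast
      ring
    rw [hA_def, h2, ← Real.rpow_add hε4]
    norm_num
  set D := 2⁻¹ * (4:ℝ) ^ (-(2 / p)) * ε ^ (q / p) with hD_def
  have hD0 : (0:ℝ) ≤ D := by positivity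
  have hAD : A * (2 * D) = ε := by
    have h4 : ((4:ℝ) ^ (-(2/p))) ≠ 0 := (Real.rpow_pos_of_pos (by norm_num) _).ne'
    have hexp : -(2/p) + q/p = 1 := by
      have h' : -(2/p) + q/p = (q - 2)/p := by ring
      rw [h', ← hp_def, div_self hp.ne']
    have he : ε ^ (-(2/p)) * ε ^ (q/p) = ε := by
      rw [← Real.rpow_add hε0, hexp, Real.rpow_one]
    rw [hA_def, hD_def, Real.div_rpow hε0.le (by norm_num : (0:ℝ) ≤ 4)]
    calc (ε ^ (-(2/p)) / (4:ℝ) ^ (-(2/p))) * (2 * (2⁻¹ * (4:ℝ) ^ (-(2/p)) * ε ^ (q/p)))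
        = ε ^ (-(2/p)) * ε ^ (q/p) := by field_simp
      _ = ε := he
  clear_value p c A D
  -- symmetrization of f
  have hfsum : ∀ y : ℝ, |y| ≤ 1 → f y + f (-y) = y ^ 2 := by
    intro y hy
    rw [abs_le] at hy
    rcases lt_trichotomy y 0 with h | h | h
    · rw [hf' y (fun hm => absurd hm.1 (not_le.mpr h)),
        hf (-y) ⟨by linarith, by linarith⟩, max_eq_right h.le]
      ring
    · subst h
      rw [neg_zero, hf 0 ⟨le_refl _, by norm_num⟩]
      norm_num
    · rw [hf y ⟨h.le, hy.2⟩,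
        hf' (-y) (fun hm => absurd hm.1 (not_le.mpr (by linarith))),
        max_eq_right (by linarith : -y ≤ (0:ℝ))]
      ring
  have hfsum' : ∀ y : ℝ, 1 < |y| → f y + f (-y) = |y| := by
    intro y hy
    rcases lt_or_ge y 0 with h | h
    · have hy1 : y < -1 := by rcases abs_cases y with ⟨h1, _⟩ | ⟨h1, _⟩ <;> linarith
      rw [hf' y (fun hm => absurd hm.1 (not_le.mpr h)),
        hf' (-y) (fun hm => absurd hm.2 (not_le.mpr (by linarith))),
        max_eq_right h.le, max_eq_left (by linarith : (0:ℝ) ≤ -y), abs_of_neg h]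
      ring
    · have hy1 : 1 < y := by rwa [abs_of_nonneg h] at hy
      rw [hf' y (fun hm => absurd hm.2 (not_le.mpr hy1)),
        hf' (-y) (fun hm => absurd hm.1 (not_le.mpr (by linarith))),
        max_eq_left h, max_eq_right (by linarith : -y ≤ (0:ℝ)), abs_of_nonneg h]
      ring
  have hyx : |c * x| = c * |x| := by rw [abs_mul, abs_of_pos hc0]
  have hx2 : A * (c * x) ^ 2 = x ^ 2 := by
    rw [mul_pow, ← mul_assoc, hAc, one_mul]
  have hg1 := hg (c * x)
  have hg2 := hg (-(c * x))
  rw [abs_neg] at hg2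
  rcases le_or_gt |c * x| 1 with hcase | hcase
  · -- small case
    have hmaxy : max 1 (|c * x| ^ q) = 1 :=
      max_eq_left (Real.rpow_le_one (abs_nonneg _) hcase (by linarith))
    rw [hmaxy] at hg1 hg2
    have key : A * (g (c * x) + g (-(c * x))) - x ^ 2
        = A * ((g (c * x) - f (c * x)) + (g (-(c * x)) - f (-(c * x)))) := by
      linear_combination A * hfsum (c * x) hcase + hx2
    calc |A * (g (c * x) + g (-(c * x))) - x ^ 2|
        = A * |(g (c * x) - f (c * x)) + (g (-(c * x)) - f (-(c * x)))| := by
          rw [key, abs_mul, abs_of_pos hA0]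
      _ ≤ A * (|g (c * x) - f (c * x)| + |g (-(c * x)) - f (-(c * x))|) :=
          mul_le_mul_of_nonneg_left (abs_add_le _ _) hA0.le
      _ ≤ A * (2 * D) := by
          have : |g (c * x) - f (c * x)| + |g (-(c * x)) - f (-(c * x))| ≤ 2 * D := by
            linarith
          exact mul_le_mul_of_nonneg_left this hA0.le
      _ = ε := hAD
      _ ≤ ε * max 1 (|x| ^ q) := le_mul_of_one_le_right hε0.le (le_max_left _ _)
  · -- large case
    have hxq0 : (0:ℝ) ≤ |x| ^ q := Real.rpow_nonneg (abs_nonneg x) q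
    have hcx1 : 1 < c * |x| := by rwa [hyx] at hcase
    have hx1 : 1 < |x| := by nlinarith [abs_nonneg x]
    have hx0 : (0:ℝ) < |x| := by linarith
    have hmaxy : max 1 (|c * x| ^ q) = |c * x| ^ q := by
      refine max_eq_right ?_
      calc (1:ℝ) = 1 ^ q := (Real.one_rpow q).symm
        _ ≤ |c * x| ^ q := Real.rpow_le_rpow zero_le_one hcase.le (by linarith)
    have hmaxx : max 1 (|x| ^ q) = |x| ^ q := by
      refine max_eq_right ?_
      calc (1:ℝ) = 1 ^ q := (Real.one_rpow q).symm
        _ ≤ |x| ^ q := Real.rpow_le_rpow zero_le_one hx1.le (by linarith)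
    rw [hmaxy] at hg1 hg2
    have hycq : |c * x| ^ q = c ^ q * |x| ^ q := by
      rw [hyx, Real.mul_rpow hc0.le (abs_nonneg x)]
    have hcq : c ^ q ≤ ε / 4 := by
      have e1 : c ^ q = c ^ p * c ^ (2:ℝ) := by rw [← Real.rpow_add hc0, hpq]
      have e2 : c ^ (2:ℝ) ≤ 1 := Real.rpow_le_one hc0.le hc1 (by norm_num)
      have e3 : (0:ℝ) ≤ c ^ p := (Real.rpow_pos_of_pos hc0 p).le
      calc c ^ q = c ^ p * c ^ (2:ℝ) := e1
        _ ≤ c ^ p * 1 := mul_le_mul_of_nonneg_left e2 e3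
        _ = ε / 4 := by rw [mul_one, hcp]
    have hxq : |x| ^ q = |x| ^ p * x ^ 2 := by
      rw [← hpq, Real.rpow_add hx0]
      congr 1
      rw [show ((2:ℝ)) = ((2:ℕ):ℝ) by norm_num, Real.rpow_natCast, sq_abs]
    have heps : (1:ℝ) ≤ ε / 4 * |x| ^ p := by
      calc (1:ℝ) = 1 ^ p := (Real.one_rpow p).symm
        _ ≤ (c * |x|) ^ p := Real.rpow_le_rpow zero_le_one hcx1.le hp.le
        _ = c ^ p * |x| ^ p := Real.mul_rpow hc0.le (abs_nonneg x)
        _ = ε / 4 * |x| ^ p := by rw [hcp]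
    have hx2q : x ^ 2 ≤ ε / 4 * |x| ^ q := by
      rw [hxq, ← mul_assoc]
      nlinarith [sq_nonneg x, heps]
    have hAcx : A * |c * x| ≤ x ^ 2 := by
      rw [hyx]
      calc A * (c * |x|) = A * (c * |x|) * 1 := (mul_one _).symm
        _ ≤ A * (c * |x|) * (c * |x|) := by
            refine mul_le_mul_of_nonneg_left hcx1.le ?_
            positivity
        _ = A * c ^ 2 * |x| ^ 2 := by ring
        _ = x ^ 2 := by rw [hAc, one_mul, sq_abs]
    have key2 : A * (g (c * x) + g (-(c * x))) - x ^ 2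
        = A * ((g (c * x) - f (c * x)) + (g (-(c * x)) - f (-(c * x))))
          + (A * |c * x| - x ^ 2) := by
      linear_combination A * hfsum' (c * x) hcase
    have hE : |A * ((g (c * x) - f (c * x)) + (g (-(c * x)) - f (-(c * x))))|
        ≤ ε * (c ^ q * |x| ^ q) := by
      rw [abs_mul, abs_of_pos hA0]
      calc A * |(g (c * x) - f (c * x)) + (g (-(c * x)) - f (-(c * x)))|
          ≤ A * (2 * D * |c * x| ^ q) := by
            refine mul_le_mul_of_nonneg_left ?_ hA0.le
            calc |(g (c * x) - f (c * x)) + (g (-(c * x)) - f (-(c * x)))|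
                ≤ |g (c * x) - f (c * x)| + |g (-(c * x)) - f (-(c * x))| := abs_add_le _ _
              _ ≤ 2 * D * |c * x| ^ q := by linarith
        _ = A * (2 * D) * |c * x| ^ q := by ring
        _ = ε * |c * x| ^ q := by rw [hAD]
        _ = ε * (c ^ q * |x| ^ q) := by rw [hycq]
    have hεcq : ε * c ^ q ≤ ε / 4 := by
      have h1 : ε * c ^ q ≤ ε * (ε / 4) := mul_le_mul_of_nonneg_left hcq hε0.le
      have h2 : ε * (ε / 4) ≤ 1 * (ε / 4) :=
        mul_le_mul_of_nonneg_right hε1 (by linarith)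
      linarith
    have hstep : ε * (c ^ q * |x| ^ q) ≤ ε / 4 * |x| ^ q := by
      calc ε * (c ^ q * |x| ^ q) = (ε * c ^ q) * |x| ^ q := by ring
        _ ≤ ε / 4 * |x| ^ q := mul_le_mul_of_nonneg_right hεcq hxq0
    rw [hmaxx]
    calc |A * (g (c * x) + g (-(c * x))) - x ^ 2|
        = |A * ((g (c * x) - f (c * x)) + (g (-(c * x)) - f (-(c * x))))
            + (A * |c * x| - x ^ 2)| := by rw [key2]
      _ ≤ |A * ((g (c * x) - f (c * x)) + (g (-(c * x)) - f (-(c * x))))|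
            + |A * |c * x| - x ^ 2| := abs_add_le _ _
      _ ≤ ε * (c ^ q * |x| ^ q) + (x ^ 2 - A * |c * x|) := by
          rw [abs_of_nonpos (by linarith : A * |c * x| - x ^ 2 ≤ 0)]
          linarith
      _ ≤ ε * |x| ^ q := by
          have h1 : 0 ≤ A * |c * x| := mul_nonneg hA0.le (abs_nonneg _)
          have h2 : 0 ≤ ε * |x| ^ q := mul_nonneg hε0.le hxq0
          linarith
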